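/- Let m ≥ 2 and 1 ≤ p < ∞ be fixed, and let j ≠ l with 1 ≤ j, l ≤ m. Then there exist positive constants A, B and k₀ such that for all k ≥ k₀, A·k^{p+m−1} ≤ Σ_{n ∈ ℕ^m, |n| = k, n_j > 0} n_j^{p/2}·n_l^{p/2} ≤ B·k^{p+m−1}. -/

import Mathlib

open Finset

-- Upper bound on cardinality of antidiagonalTuple
lemma card_adt_le (m k : ℕ) (j : Fin m) :
    (Finset.Nat.antidiagonalTuple m k).card ≤ (k+1)^(m-1) := by
  classical
  have h : (Finset.Nat.antidiagonalTuple m k).card ≤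
      (Fintype.piFinset (fun i : Fin m =>
        if i = j then ({0} : Finset ℕ) else Finset.range (k+1))).card := by
    apply Finset.card_le_card_of_injOn (fun n => Function.update n j 0)
    · intro n hn
      rw [Finset.mem_coe, Finset.Nat.mem_antidiagonalTuple] at hn
      rw [Finset.mem_coe, Fintype.mem_piFinset]
      intro i
      by_cases hi : i = j
      · subst hi; simp
      · simp only [Function.update_of_ne hi, if_neg hi, Finset.mem_range]
        have := Finset.single_le_sum (f := n) (fun i _ => Nat.zero_le _) (Finset.mem_univ i)
        omega
    · intro n hn n' hn' heq
      simp only [Finset.mem_coe, Finset.Nat.mem_antidiagonalTuple] at hn hn'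
      have hne : ∀ i, i ≠ j → n i = n' i := by
        intro i hi
        have := congrFun heq i
        simpa [Function.update_of_ne hi] using this
      have hs : ∑ i ∈ Finset.univ.erase j, n i = ∑ i ∈ Finset.univ.erase j, n' i :=
        Finset.sum_congr rfl (fun i hi => hne i (Finset.mem_erase.1 hi).1)
      have h1 := Finset.add_sum_erase Finset.univ n (Finset.mem_univ j)
      have h2 := Finset.add_sum_erase Finset.univ n' (Finset.mem_univ j)
      have : n j = n' j := by omega
      funext i
      by_cases hi : i = j
      · subst hi; exact this
      · exact hne i hi
  refine h.trans ?_
  rw [Fintype.card_piFinset]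
  have : ∀ i : Fin m, ((if i = j then ({0} : Finset ℕ) else Finset.range (k+1))).card
      = if i = j then 1 else k+1 := by
    intro i; by_cases hi : i = j <;> simp [hi]
  rw [Finset.prod_congr rfl (fun i _ => this i)]
  rw [← Finset.mul_prod_erase Finset.univ _ (Finset.mem_univ j)]
  rw [if_pos rfl, one_mul]
  apply le_of_eq
  have hcard : (Finset.univ.erase j).card = m - 1 := by
    rw [Finset.card_erase_of_mem (Finset.mem_univ j)]
    simp
  calc ∏ i ∈ Finset.univ.erase j, (if i = j then 1 else k+1)
      = ∏ i ∈ Finset.univ.erase j, (k+1) :=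
        Finset.prod_congr rfl (fun i hi => by rw [if_neg (Finset.mem_erase.1 hi).1])
    _ = (k+1)^(m-1) := by rw [Finset.prod_const, hcard]



theorem stmt6 (m : ℕ) (hm : 2 ≤ m) (p : ℝ) (hp1 : 1 ≤ p)
    (j l : Fin m) (hjl : j ≠ l) :
    ∃ A B : ℝ, 0 < A ∧ 0 < B ∧ ∃ k₀ : ℕ, ∀ k : ℕ, k₀ ≤ k →
      A * (k : ℝ) ^ (p + m - 1) ≤
        (∑ n ∈ (Finset.Nat.antidiagonalTuple m k).filter (fun n => 0 < n j),
          ((n j : ℝ) ^ (p / 2)) * ((n l : ℝ) ^ (p / 2))) ∧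
      (∑ n ∈ (Finset.Nat.antidiagonalTuple m k).filter (fun n => 0 < n j),
          ((n j : ℝ) ^ (p / 2)) * ((n l : ℝ) ^ (p / 2))) ≤
        B * (k : ℝ) ^ (p + m - 1) := by
  classical
  have hm0 : 0 < m := by omega
  refine ⟨(1 / (8*(m:ℝ))) ^ (p + (m:ℝ) - 1), 2 ^ (m-1), ?_, ?_, 8*m, ?_⟩
  · apply Real.rpow_pos_of_pos
    have : (0:ℝ) < m := by exact_mod_cast hm0
    positivity
  · positivity
  intro k hk
  have hk0 : 0 < k := by omega
  have hkr : (0:ℝ) < k := by exact_mod_cast hk0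
  have hcast : ((m-1:ℕ):ℝ) = (m:ℝ) - 1 := by
    rw [Nat.cast_sub (by omega : 1 ≤ m)]; simp
  have hsplit : (k:ℝ)^(p+(m:ℝ)-1) = (k:ℝ)^p * (k:ℝ)^(m-1:ℕ) := by
    rw [← Real.rpow_natCast (k:ℝ) (m-1), ← Real.rpow_add hkr, hcast]
    ring_nf
  set S := (Finset.Nat.antidiagonalTuple m k).filter (fun n => 0 < n j) with hS
  have hpos : ∀ n ∈ S, (0:ℝ) ≤ ((n j : ℝ) ^ (p / 2)) * ((n l : ℝ) ^ (p / 2)) := by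
    intro n _
    have h1 : (0:ℝ) ≤ (n j : ℝ) := Nat.cast_nonneg _
    have h2 : (0:ℝ) ≤ (n l : ℝ) := Nat.cast_nonneg _
    positivity
  constructor
  · -- lower bound
    set q := k / (4*m) with hqdef
    have h4m : 0 < 4*m := by omega
    have hq2 : 2 ≤ q := by
      have h1 : 8*m / (4*m) ≤ q := Nat.div_le_div_right hk
      rwa [show 8*m = 2*(4*m) by ring, Nat.mul_div_cancel 2 h4m] at h1
    have hkq : k ≤ 8*m*q := by
      have hmod := Nat.div_add_mod k (4*m)
      rw [← hqdef] at hmod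
      have hmlt : k % (4*m) < 4*m := Nat.mod_lt _ h4m
      have h1 : 4*m ≤ 4*m*q := by
        calc 4*m = 4*m*1 := by ring
          _ ≤ 4*m*q := Nat.mul_le_mul_left _ (by omega)
      have h8 : 8*m*q = 4*m*q + 4*m*q := by ring
      linarith
    have h4mq : 4*m*q ≤ k := by
      calc 4*m*q = (k/(4*m))*(4*m) := by rw [hqdef]; ring
        _ ≤ k := Nat.div_mul_le_self k (4*m)
    set T := Fintype.piFinset (fun i : Fin m =>
      if i = l then ({0} : Finset ℕ) else Finset.Ico q (2*q)) with hT
    set F : (Fin m → ℕ) → (Fin m → ℕ) :=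
      fun g => Function.update g l (k - ∑ i ∈ Finset.univ.erase l, g i) with hF
    have hmemT : ∀ g ∈ T, g l = 0 ∧ ∀ i, i ≠ l → q ≤ g i ∧ g i < 2*q := by
      intro g hg
      rw [hT, Fintype.mem_piFinset] at hg
      constructor
      · have := hg l; simpa using this
      · intro i hi; have := hg i; rwa [if_neg hi, Finset.mem_Ico] at this
    have hcarde : (Finset.univ.erase l).card = m - 1 := by
      rw [Finset.card_erase_of_mem (Finset.mem_univ l)]; simp
    have hsum_le : ∀ g ∈ T, ∑ i ∈ Finset.univ.erase l, g i ≤ k/2 := by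
      intro g hg
      have h1 : ∑ i ∈ Finset.univ.erase l, g i ≤ ∑ _i ∈ Finset.univ.erase l, 2*q :=
        Finset.sum_le_sum (fun i hi => le_of_lt ((hmemT g hg).2 i (Finset.mem_erase.1 hi).1).2)
      rw [Finset.sum_const, smul_eq_mul, hcarde] at h1
      have h2 : (m-1)*(2*q)*2 ≤ k :=
        calc (m-1)*(2*q)*2 ≤ m*(2*q)*2 := by gcongr <;> omega
          _ = 4*m*q := by ring
          _ ≤ k := h4mq
      have h3 : (m-1)*(2*q) ≤ k/2 := (Nat.le_div_iff_mul_le two_pos).2 h2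
      omega
    have hFj : ∀ g, F g j = g j := fun g => Function.update_of_ne hjl _ _
    have hFl : ∀ g, F g l = k - ∑ i ∈ Finset.univ.erase l, g i := fun g =>
      Function.update_self _ _ _
    have hFsum : ∀ g ∈ T, ∑ i ∈ Finset.univ.erase l, F g i = ∑ i ∈ Finset.univ.erase l, g i :=
      fun g _ => Finset.sum_congr rfl (fun i hi =>
        Function.update_of_ne (Finset.mem_erase.1 hi).1 _ _)
    have hFmem : ∀ g ∈ T, F g ∈ S := by
      intro g hg
      rw [hS, Finset.mem_filter, Finset.Nat.mem_antidiagonalTuple]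
      have hs := hsum_le g hg
      have hsk : ∑ i ∈ Finset.univ.erase l, g i ≤ k := le_trans hs (Nat.div_le_self _ _)
      constructor
      · rw [← Finset.add_sum_erase Finset.univ (F g) (Finset.mem_univ l), hFsum g hg, hFl]
        omega
      · rw [hFj]
        have := ((hmemT g hg).2 j hjl).1
        omega
    have hFinj : ∀ g ∈ T, ∀ g' ∈ T, F g = F g' → g = g' := by
      intro g hg g' hg' heq
      funext i
      by_cases hi : i = l
      · subst hi; rw [(hmemT g hg).1, (hmemT g' hg').1]
      · have := congrFun heq i
        simp only [hF] at this
        rwa [Function.update_of_ne hi, Function.update_of_ne hi] at this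
    have hql : ∀ g ∈ T, q ≤ F g l := by
      intro g hg
      rw [hFl]
      have hs := hsum_le g hg
      have hq2k : q*2 ≤ k := by nlinarith [h4mq]
      have : q ≤ k/2 := (Nat.le_div_iff_mul_le two_pos).2 hq2k
      omega
    have hqr : (0:ℝ) < q := by exact_mod_cast (by omega : 0 < q)
    have hlow : ∀ g ∈ T, (q:ℝ)^p ≤ ((F g j : ℝ) ^ (p / 2)) * ((F g l : ℝ) ^ (p / 2)) := by
      intro g hg
      have h1 : (q:ℝ) ≤ (F g j : ℝ) := by
        rw [hFj]; exact_mod_cast ((hmemT g hg).2 j hjl).1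
      have h2 : (q:ℝ) ≤ (F g l : ℝ) := by exact_mod_cast hql g hg
      have hh1 : (q:ℝ)^(p/2) ≤ (F g j : ℝ)^(p/2) :=
        Real.rpow_le_rpow (le_of_lt hqr) h1 (by linarith)
      have hh2 : (q:ℝ)^(p/2) ≤ (F g l : ℝ)^(p/2) :=
        Real.rpow_le_rpow (le_of_lt hqr) h2 (by linarith)
      calc (q:ℝ)^p = (q:ℝ)^(p/2) * (q:ℝ)^(p/2) := by rw [← Real.rpow_add hqr]; ring_nf
        _ ≤ ((F g j : ℝ) ^ (p / 2)) * ((F g l : ℝ) ^ (p / 2)) :=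
          mul_le_mul hh1 hh2 (Real.rpow_nonneg (le_of_lt hqr) _)
            (Real.rpow_nonneg (Nat.cast_nonneg _) _)
    have hcardT : T.card = q^(m-1) := by
      rw [hT, Fintype.card_piFinset]
      have hcc : ∀ i : Fin m, ((if i = l then ({0} : Finset ℕ) else Finset.Ico q (2*q))).card
          = if i = l then 1 else q := by
        intro i; by_cases hi : i = l
        · simp [hi]
        · rw [if_neg hi, if_neg hi, Nat.card_Ico]; omega
      rw [Finset.prod_congr rfl (fun i _ => hcc i)]
      rw [← Finset.mul_prod_erase Finset.univ _ (Finset.mem_univ l)]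
      rw [if_pos rfl, one_mul]
      calc ∏ i ∈ Finset.univ.erase l, (if i = l then 1 else q)
          = ∏ _i ∈ Finset.univ.erase l, q :=
            Finset.prod_congr rfl (fun i hi => by rw [if_neg (Finset.mem_erase.1 hi).1])
        _ = q^(m-1) := by rw [Finset.prod_const, hcarde]
    -- real arithmetic
    have hmr : (0:ℝ) < m := by exact_mod_cast hm0
    have hcq : (k:ℝ)/(8*m) ≤ (q:ℝ) := by
      rw [div_le_iff₀ (by positivity)]
      have : (k:ℝ) ≤ 8*m*q := by exact_mod_cast hkq
      linarith
    have hcpos : (0:ℝ) < (k:ℝ)/(8*m) := by positivity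
    calc (1 / (8*(m:ℝ))) ^ (p + (m:ℝ) - 1) * (k:ℝ)^(p + (m:ℝ) - 1)
        = ((1 / (8*(m:ℝ))) * k) ^ (p + (m:ℝ) - 1) := by
          rw [Real.mul_rpow (by positivity) (le_of_lt hkr)]
      _ = ((k:ℝ)/(8*m)) ^ (p + (m:ℝ) - 1) := by ring_nf
      _ = ((k:ℝ)/(8*m)) ^ p * ((k:ℝ)/(8*m)) ^ (m-1:ℕ) := by
          rw [← Real.rpow_natCast ((k:ℝ)/(8*m)) (m-1), ← Real.rpow_add hcpos, hcast]
          ring_nf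
      _ ≤ (q:ℝ)^p * (q:ℝ)^(m-1:ℕ) := by
          apply mul_le_mul (Real.rpow_le_rpow (le_of_lt hcpos) hcq (by linarith))
            (pow_le_pow_left₀ (le_of_lt hcpos) hcq _)
            (by positivity) (Real.rpow_nonneg (le_of_lt hqr) _)
      _ = (T.card : ℝ) * (q:ℝ)^p := by
          rw [hcardT]; push_cast; ring
      _ = T.card • ((q:ℝ)^p) := by rw [nsmul_eq_mul]
      _ ≤ ∑ g ∈ T, ((F g j : ℝ) ^ (p / 2)) * ((F g l : ℝ) ^ (p / 2)) :=
          Finset.card_nsmul_le_sum T _ _ hlow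
      _ = ∑ n ∈ T.image F, ((n j : ℝ) ^ (p / 2)) * ((n l : ℝ) ^ (p / 2)) := by
          rw [Finset.sum_image hFinj]
      _ ≤ ∑ n ∈ S, ((n j : ℝ) ^ (p / 2)) * ((n l : ℝ) ^ (p / 2)) := by
          apply Finset.sum_le_sum_of_subset_of_nonneg
          · intro n hn
            rw [Finset.mem_image] at hn
            obtain ⟨g, hg, rfl⟩ := hn
            exact hFmem g hg
          · intro n hn _; exact hpos n hn
  · -- upper bound
    have hterm : ∀ n ∈ S, ((n j : ℝ) ^ (p / 2)) * ((n l : ℝ) ^ (p / 2)) ≤ (k:ℝ)^p := by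
      intro n hn
      rw [hS, Finset.mem_filter, Finset.Nat.mem_antidiagonalTuple] at hn
      have hj : n j ≤ k := hn.1 ▸ Finset.single_le_sum (f := n)
        (fun i _ => Nat.zero_le _) (Finset.mem_univ j)
      have hl : n l ≤ k := hn.1 ▸ Finset.single_le_sum (f := n)
        (fun i _ => Nat.zero_le _) (Finset.mem_univ l)
      have h1 : ((n j : ℝ)) ^ (p/2) ≤ (k:ℝ) ^ (p/2) :=
        Real.rpow_le_rpow (Nat.cast_nonneg _) (by exact_mod_cast hj) (by linarith)
      have h2 : ((n l : ℝ)) ^ (p/2) ≤ (k:ℝ) ^ (p/2) :=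
        Real.rpow_le_rpow (Nat.cast_nonneg _) (by exact_mod_cast hl) (by linarith)
      calc ((n j : ℝ)) ^ (p/2) * ((n l : ℝ)) ^ (p/2)
          ≤ (k:ℝ)^(p/2) * (k:ℝ)^(p/2) := by
            apply mul_le_mul h1 h2 (Real.rpow_nonneg (Nat.cast_nonneg _) _)
              (Real.rpow_nonneg (le_of_lt hkr) _)
        _ = (k:ℝ)^p := by rw [← Real.rpow_add hkr]; ring_nf
    have hcard : S.card ≤ (k+1)^(m-1) :=
      le_trans (Finset.card_le_card (Finset.filter_subset _ _)) (card_adt_le m k j)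
    calc ∑ n ∈ S, ((n j : ℝ) ^ (p / 2)) * ((n l : ℝ) ^ (p / 2))
        ≤ ∑ _n ∈ S, (k:ℝ)^p := Finset.sum_le_sum hterm
      _ = S.card * (k:ℝ)^p := by rw [Finset.sum_const, nsmul_eq_mul]
      _ ≤ ((k+1)^(m-1) : ℕ) * (k:ℝ)^p := by
          apply mul_le_mul_of_nonneg_right _ (Real.rpow_nonneg (le_of_lt hkr) _)
          exact_mod_cast hcard
      _ ≤ (2*(k:ℝ))^(m-1) * (k:ℝ)^p := by
          apply mul_le_mul_of_nonneg_right _ (Real.rpow_nonneg (le_of_lt hkr) _)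
          push_cast
          apply pow_le_pow_left₀ (by positivity)
          have hk1 : (1:ℝ) ≤ k := by exact_mod_cast hk0
          linarith
      _ = 2^(m-1) * ((k:ℝ)^p * (k:ℝ)^(m-1:ℕ)) := by ring
      _ = 2^(m-1) * (k:ℝ)^(p+(m:ℝ)-1) := by rw [hsplit]
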